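/- Let μ₁, λ > 0 and Λ ∈ ℝ³ with Λᵢ > 0. Let s, Λ̂ : [0,∞) → ℝ³ be differentiable and satisfy ⟨s(t), s′(t)⟩ = −μ₁ ‖s(t)‖² − Σᵢ Λ̂ᵢ(t) |sᵢ(t)| and Λ̂ᵢ′(t) = λ |sᵢ(t)| for each i and all t ≥ 0. Then each Λ̂ᵢ is nondecreasing and bounded, hence converges to a finite limit as t → ∞, and ∫₀^∞ |sᵢ(t)| dt < ∞ for each i. -/

import Mathlib

open scoped RealInnerProductSpace
open Set MeasureTheory Filter

/-- **Boundedness and integrability in the proof of Theorem 2.** Along the closed-loop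
sliding dynamics `⟨s, s′⟩ = −μ₁‖s‖² − Σᵢ Λ̂ᵢ|sᵢ|` with adaptation law `Λ̂ᵢ′ = λ|sᵢ|`,
each adaptive gain `Λ̂ᵢ` is nondecreasing and bounded, hence converges to a finite limit,
and `∫₀^∞ |sᵢ(t)| dt < ∞` for each `i`. -/
theorem qasmc_gains_bounded_and_s_integrable (μ₁ lam : ℝ) (hμ₁ : 0 < μ₁) (hlam : 0 < lam)
    (Λ : EuclideanSpace ℝ (Fin 3)) (hΛ : ∀ i, 0 < Λ i)
    (s Λhat : ℝ → EuclideanSpace ℝ (Fin 3)) (s' Λhat' : ℝ → EuclideanSpace ℝ (Fin 3))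
    (hs : ∀ t ∈ Set.Ici (0:ℝ), HasDerivWithinAt s (s' t) (Set.Ici 0) t)
    (hΛhat : ∀ t ∈ Set.Ici (0:ℝ), HasDerivWithinAt Λhat (Λhat' t) (Set.Ici 0) t)
    (hclosed : ∀ t ∈ Set.Ici (0:ℝ),
      ⟪s t, s' t⟫ = -μ₁ * ‖s t‖ ^ 2 - ∑ i, Λhat t i * |s t i|)
    (hadapt : ∀ t ∈ Set.Ici (0:ℝ), ∀ i, Λhat' t i = lam * |s t i|) :
    ∀ i : Fin 3,
      MonotoneOn (fun t => Λhat t i) (Set.Ici 0) ∧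
      (∃ M : ℝ, ∀ t ∈ Set.Ici (0:ℝ), Λhat t i ≤ M) ∧
      (∃ l : ℝ, Filter.Tendsto (fun t => Λhat t i) Filter.atTop (nhds l)) ∧
      MeasureTheory.IntegrableOn (fun t => |s t i|) (Set.Ici 0) := by
  -- componentwise derivative of Λhat
  have hcomp : ∀ (i : Fin 3), ∀ t ∈ Set.Ici (0:ℝ),
      HasDerivWithinAt (fun u => Λhat u i) (Λhat' t i) (Set.Ici 0) t := by
    intro i t ht
    exact (EuclideanSpace.proj i).hasFDerivAt.comp_hasDerivWithinAt t (hΛhat t ht)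
  have hcompAt : ∀ (i : Fin 3), ∀ t ∈ Set.Ioi (0:ℝ),
      HasDerivAt (fun u => Λhat u i) (Λhat' t i) t := by
    intro i t ht
    exact (hcomp i t (Set.mem_Ici.mpr (le_of_lt ht))).hasDerivAt (Ici_mem_nhds ht)
  -- Lyapunov function
  set W : ℝ → ℝ := fun t => ⟪s t, s t⟫ + (1/lam) * ∑ j, (Λhat t j)^2 with hW
  have hWderiv : ∀ t ∈ Set.Ici (0:ℝ),
      HasDerivWithinAt W (-(2*μ₁) * ‖s t‖^2) (Set.Ici 0) t := by
    intro t ht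
    have h1 : HasDerivWithinAt (fun u => ⟪s u, s u⟫)
        (⟪s t, s' t⟫ + ⟪s' t, s t⟫) (Set.Ici 0) t :=
      HasDerivWithinAt.inner ℝ (hs t ht) (hs t ht)
    have h2 : HasDerivWithinAt (fun u => ∑ j, (Λhat u j)^2)
        (∑ j, 2 * Λhat t j * Λhat' t j) (Set.Ici 0) t := by
      have := HasDerivWithinAt.fun_sum (u := (Finset.univ : Finset (Fin 3)))
        (A := fun j u => (Λhat u j)^2) (A' := fun j => 2 * Λhat t j * Λhat' t j)
        (fun j _ => by
          have := ((hcomp j t ht).fun_pow 2)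
          simpa [mul_comm, mul_assoc, mul_left_comm] using this)
      simpa using this
    have hsum : HasDerivWithinAt W
        ((⟪s t, s' t⟫ + ⟪s' t, s t⟫) + (1/lam) * ∑ j, 2 * Λhat t j * Λhat' t j)
        (Set.Ici 0) t := h1.add (h2.const_mul _)
    have hval : (⟪s t, s' t⟫ + ⟪s' t, s t⟫) + (1/lam) * ∑ j, 2 * Λhat t j * Λhat' t j
        = -(2*μ₁) * ‖s t‖^2 := by
      have hsym : ⟪s' t, s t⟫ = ⟪s t, s' t⟫ := real_inner_comm _ _
      rw [hsym, hclosed t ht]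
      have : ∀ j, 2 * Λhat t j * Λhat' t j = 2 * lam * (Λhat t j * |s t j|) := by
        intro j; rw [hadapt t ht j]; ring
      rw [Finset.sum_congr rfl (fun j _ => this j), ← Finset.mul_sum]
      field_simp
      ring
    rwa [hval] at hsum
  -- W is antitone on [0, ∞)
  have hWcont : ContinuousOn W (Set.Ici 0) := fun t ht =>
    (hWderiv t ht).continuousWithinAt
  have hWanti : AntitoneOn W (Set.Ici 0) := by
    apply antitoneOn_of_deriv_nonpos (convex_Ici 0) hWcont
    · intro x hx
      rw [interior_Ici] at hx
      exact (((hWderiv x (Set.mem_Ici.mpr (le_of_lt hx))).hasDerivAt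
        (Ici_mem_nhds hx)).differentiableAt).differentiableWithinAt
    · intro x hx
      rw [interior_Ici] at hx
      rw [((hWderiv x (Set.mem_Ici.mpr (le_of_lt hx))).hasDerivAt (Ici_mem_nhds hx)).deriv]
      have : (0:ℝ) ≤ ‖s x‖^2 := sq_nonneg _
      nlinarith
  -- pointwise bound on the gains
  have hbound : ∀ (i : Fin 3), ∀ t ∈ Set.Ici (0:ℝ),
      Λhat t i ≤ Real.sqrt (lam * W 0) := by
    intro i t ht
    have hWle : W t ≤ W 0 := hWanti Set.self_mem_Ici ht ht
    have hsq : (Λhat t i)^2 ≤ lam * W 0 := by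
      have h1 : (Λhat t i)^2 ≤ ∑ j, (Λhat t j)^2 :=
        Finset.single_le_sum (f := fun j => (Λhat t j)^2)
          (fun j _ => sq_nonneg _) (Finset.mem_univ i)
      have h2 : (0:ℝ) ≤ ⟪s t, s t⟫ := real_inner_self_nonneg
      have h3 : lam * W t = lam * ⟪s t, s t⟫ + ∑ j, (Λhat t j)^2 := by
        rw [hW]; field_simp
      nlinarith [mul_le_mul_of_nonneg_left hWle (le_of_lt hlam)]
    calc Λhat t i ≤ |Λhat t i| := le_abs_self _
      _ = Real.sqrt ((Λhat t i)^2) := (Real.sqrt_sq_eq_abs _).symm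
      _ ≤ Real.sqrt (lam * W 0) := Real.sqrt_le_sqrt hsq
  intro i
  -- monotonicity
  have hmono : MonotoneOn (fun t => Λhat t i) (Set.Ici 0) := by
    apply monotoneOn_of_deriv_nonneg (convex_Ici 0)
      (fun t ht => (hcomp i t ht).continuousWithinAt)
    · intro x hx
      rw [interior_Ici] at hx
      exact ((hcompAt i x hx).differentiableAt).differentiableWithinAt
    · intro x hx
      rw [interior_Ici] at hx
      rw [(hcompAt i x hx).deriv, hadapt x (Set.mem_Ici.mpr (le_of_lt hx)) i]
      positivity
  refine ⟨hmono, ⟨Real.sqrt (lam * W 0), hbound i⟩, ?_⟩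
  -- convergence
  have htend : ∃ l : ℝ, Tendsto (fun t => Λhat t i) atTop (nhds l) := by
    set g : ℝ → ℝ := fun t => Λhat (max t 0) i with hg
    have hgmono : Monotone g := fun a b hab =>
      hmono (le_max_right a 0) (le_max_right b 0) (max_le_max hab le_rfl)
    have hgbdd : BddAbove (Set.range g) := by
      refine ⟨Real.sqrt (lam * W 0), ?_⟩
      rintro _ ⟨t, rfl⟩
      exact hbound i _ (le_max_right t 0)
    refine ⟨⨆ t, g t, ?_⟩
    have := tendsto_atTop_ciSup hgmono hgbdd
    apply this.congr'
    filter_upwards [eventually_ge_atTop (0:ℝ)] with t ht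
    simp [hg, max_eq_left ht]
  obtain ⟨l, hl⟩ := htend
  refine ⟨⟨l, hl⟩, ?_⟩
  -- integrability via the adaptation law
  have hInt : IntegrableOn (fun t => |s t i|) (Set.Ioi 0) := by
    apply integrableOn_Ioi_deriv_of_nonneg (g := fun t => (1/lam) * Λhat t i)
      (l := (1/lam) * l)
    · exact ((hcomp i 0 Set.self_mem_Ici).continuousWithinAt).const_smul (1/lam)
    · intro x hx
      have h1 : HasDerivAt (fun u => Λhat u i) (lam * |s x i|) x := by
        have := hcompAt i x hx
        rwa [hadapt x (Set.mem_Ici.mpr (le_of_lt hx)) i] at this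
      have h2 := h1.const_mul (1/lam)
      have : (1/lam) * (lam * |s x i|) = |s x i| := by field_simp
      rwa [this] at h2
    · intro x _; exact abs_nonneg _
    · exact hl.const_mul (1/lam)
  rwa [integrableOn_Ici_iff_integrableOn_Ioi]
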